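/- Let f : [0,1] → ℝ be convex and differentiable, and p : [0,1] → ℝ be continuous and nonnegative. Then (∫₀¹ f(t) dt)·(∫₀¹ p(t) dt) + (∫₀¹ f'(t) dt)·(∫₀¹ t·p(t) dt) − (∫₀¹ t·f'(t) dt)·(∫₀¹ p(t) dt) ≤ ∫₀¹ f(t)·p(t) dt. -/

import Mathlib

open MeasureTheory Set intervalIntegral

lemma support_line_le (f f' : ℝ → ℝ)
    (hf : ConvexOn ℝ (Icc (0:ℝ) 1) f)
    (hderiv : ∀ t ∈ Icc (0:ℝ) 1, HasDerivAt f (f' t) t)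
    {s t : ℝ} (hs : s ∈ Icc (0:ℝ) 1) (ht : t ∈ Icc (0:ℝ) 1) :
    f s + f' s * (t - s) ≤ f t := by
  rcases lt_trichotomy s t with h | h | h
  · have := hf.le_slope_of_hasDerivAt hs ht h (hderiv s hs)
    rw [slope_def_field] at this
    have h' : 0 < t - s := by linarith
    have := (le_div_iff₀ h').mp this
    linarith
  · simp [h]
  · have := hf.slope_le_of_hasDerivAt ht hs h (hderiv s hs)
    rw [slope_def_field] at this
    have h' : 0 < s - t := by linarith
    have := (div_le_iff₀ h').mp this
    linarith

theorem levin_steckin_general (f f' p : ℝ → ℝ)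
    (hf : ConvexOn ℝ (Icc (0:ℝ) 1) f)
    (hderiv : ∀ t ∈ Icc (0:ℝ) 1, HasDerivAt f (f' t) t)
    (hpc : ContinuousOn p (Icc (0:ℝ) 1))
    (hp0 : ∀ t ∈ Icc (0:ℝ) 1, 0 ≤ p t)
    (hfint : IntervalIntegrable f volume 0 1)
    (hf'int : IntervalIntegrable f' volume 0 1)
    (htf'int : IntervalIntegrable (fun t => t * f' t) volume 0 1)
    (hpfint : IntervalIntegrable (fun t => f t * p t) volume 0 1) :
    (∫ t in (0:ℝ)..1, f t) * (∫ t in (0:ℝ)..1, p t)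
      + ((∫ t in (0:ℝ)..1, f' t) * (∫ t in (0:ℝ)..1, t * p t)
        - (∫ t in (0:ℝ)..1, t * f' t) * (∫ t in (0:ℝ)..1, p t)) ≤
      ∫ t in (0:ℝ)..1, f t * p t := by
  set A := ∫ t in (0:ℝ)..1, p t with hA
  set B := ∫ t in (0:ℝ)..1, t * p t with hB
  set C := ∫ t in (0:ℝ)..1, f t * p t with hC
  have huv : Icc (0:ℝ) 1 = uIcc (0:ℝ) 1 := by
    rw [uIcc_of_le (by norm_num : (0:ℝ) ≤ 1)]
  have hpint : IntervalIntegrable p volume 0 1 :=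
    (hpc.mono (by rw [huv])).intervalIntegrable
  -- key pointwise-in-s inequality
  have key : ∀ s ∈ Icc (0:ℝ) 1,
      f s * A + (f' s * B - s * f' s * A) ≤ C := by
    intro s hs
    have hmono : (∫ t in (0:ℝ)..1, (f s + f' s * (t - s)) * p t) ≤ C := by
      apply intervalIntegral.integral_mono_on (by norm_num)
      · apply ContinuousOn.intervalIntegrable
        rw [← huv]
        exact (continuousOn_const.add (continuousOn_const.mul
          ((continuousOn_id.sub continuousOn_const)))).mul hpc
      · exact hpfint
      · intro t ht
        rw [huv] at ht
        exact mul_le_mul_of_nonneg_right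
          (support_line_le f f' hf hderiv hs (huv ▸ ht)) (hp0 t (huv ▸ ht))
    have heq : (∫ t in (0:ℝ)..1, (f s + f' s * (t - s)) * p t)
        = f s * A + (f' s * B - s * f' s * A) := by
      have h1 : ∀ t : ℝ, (f s + f' s * (t - s)) * p t
          = (f s - f' s * s) * p t + f' s * (t * p t) := by intro t; ring
      simp_rw [h1]
      rw [intervalIntegral.integral_add ((hpint.const_mul _))
        ((hpint.continuousOn_mul (by rw [← huv]; exact continuousOn_id)).const_mul _),
        intervalIntegral.integral_const_mul, intervalIntegral.integral_const_mul]
      ring_nf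
      rw [← hA, ← hB]
    linarith [heq ▸ hmono]
  -- integrate over s
  have hint : IntervalIntegrable
      (fun s => f s * A + (f' s * B - s * f' s * A)) volume 0 1 := by
    apply (hfint.mul_const A).add
    have : (fun s => f' s * B - s * f' s * A)
        = fun s => (f' s) * B - (s * f' s) * A := by funext s; ring
    rw [this]
    exact (hf'int.mul_const B).sub (htf'int.mul_const A)
  have hmain : (∫ s in (0:ℝ)..1, (f s * A + (f' s * B - s * f' s * A)))
      ≤ ∫ s in (0:ℝ)..1, C := by
    apply intervalIntegral.integral_mono_on (by norm_num) hint
      intervalIntegrable_const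
    intro s hs
    exact key s (huv ▸ hs)
  have hsplit : (∫ s in (0:ℝ)..1, (f s * A + (f' s * B - s * f' s * A)))
      = (∫ t in (0:ℝ)..1, f t) * A
        + ((∫ t in (0:ℝ)..1, f' t) * B - (∫ t in (0:ℝ)..1, t * f' t) * A) := by
    have : (fun s => f s * A + (f' s * B - s * f' s * A))
        = fun s => f s * A + ((f' s) * B - (s * f' s) * A) := by
      funext s; ring
    rw [this,
      intervalIntegral.integral_add (hfint.mul_const A)
        ((hf'int.mul_const B).sub (htf'int.mul_const A)),
      intervalIntegral.integral_sub (hf'int.mul_const B) (htf'int.mul_const A),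
      intervalIntegral.integral_mul_const, intervalIntegral.integral_mul_const,
      intervalIntegral.integral_mul_const]
  rw [hsplit] at hmain
  simpa using hmain
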